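/- For the two-dimensional entropy conservative flux in the x-direction with parameter vector z = (ρ, ρ/p, u, v): when the left and right states coincide, F̃₁ = ρuW, F̃₂ = ρhW²u² + p, F̃₃ = ρhW²uv, and F̃₄ = ρhW²u, where W = 1/√(1-u²-v²) and h = 1 + Γp/((Γ-1)ρ); i.e., the flux is consistent with F = (Du, m_x u + p, m_y u, m_x) with D = ρW, m_x = ρhW²u, m_y = ρhW²v. -/
import Mathlib


open Real

/-- Consistency of the 2D `x`-direction entropy conservative flux: when the left
and right states coincide with `(ρ,u,v,p)` (so all means collapse and the
Lorentz means become `uW³`, `vW³`), the flux components equal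
`(ρuW, ρhW²u² + p, ρhW²uv, ρhW²u)`. -/
theorem ec_flux2D_consistent (Γ ρ u v p : ℝ)
    (hΓ : 1 < Γ) (hΓ2 : Γ ≤ 2) (hρ : 0 < ρ) (hp : 0 < p)
    (huv : u ^ 2 + v ^ 2 < 1)
    (W h Lx Ly z1 z2 α F1 Q F2 F3 F4 : ℝ)
    (hW : W = 1 / Real.sqrt (1 - u ^ 2 - v ^ 2))
    (hh : h = 1 + Γ * p / ((Γ - 1) * ρ))
    -- the Lorentz means at equal states
    (hLx : Lx = u * W ^ 3) (hLy : Ly = v * W ^ 3)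
    -- arithmetic and logarithmic means of z₁ = ρ, z₂ = ρ/p at equal states
    (hz1 : z1 = ρ) (hz2 : z2 = ρ / p)
    (hα : α = 1 + 1 / ((Γ - 1) * z2))
    (hF1 : F1 = z1 * (u * W))
    (hQ : Q = z2 * W ^ 2
      + z2 * (u * W * Lx - (u * W) * Lx + v * W * Ly - (v * W) * Ly))
    (hF2 : F2 = Q⁻¹ * (α * z2 * Lx * F1
      + z1 * (W ^ 2 - (v * W) * Ly) + z1 * W * (u * Lx + v * Ly)))
    (hF3 : F3 = Q⁻¹ * (α * z2 * Ly * F1 + z1 * (u * W) * Ly))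
    (hF4 : F4 = W⁻¹ * (α * F1 + (u * W) * F2 + (v * W) * F3)) :
    F1 = ρ * u * W ∧
    F2 = ρ * h * W ^ 2 * u ^ 2 + p ∧
    F3 = ρ * h * W ^ 2 * u * v ∧
    F4 = ρ * h * W ^ 2 * u := by
  have hs : (0:ℝ) < 1 - u ^ 2 - v ^ 2 := by linarith
  have hW2 : W ^ 2 * (1 - u ^ 2 - v ^ 2) = 1 := by
    rw [hW, div_pow, one_pow, Real.sq_sqrt hs.le]
    field_simp
  have hWpos : 0 < W := by
    rw [hW]; positivity
  have hWne : W ≠ 0 := ne_of_gt hWpos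
  have hρne : ρ ≠ 0 := ne_of_gt hρ
  have hpne : p ≠ 0 := ne_of_gt hp
  have hΓne : Γ - 1 ≠ 0 := by linarith
  have hQ' : Q = (ρ / p) * W ^ 2 := by rw [hQ, hz2]; ring
  have hQne : Q ≠ 0 := by rw [hQ']; positivity
  have hF1' : F1 = ρ * u * W := by rw [hF1, hz1]; ring
  have hpinv : p * p⁻¹ = 1 := mul_inv_cancel₀ hpne
  have hα' : α * ρ + p = ρ * h := by
    rw [hα, hh, hz2]; field_simp; ring
  have hF2' : F2 = ρ * h * W ^ 2 * u ^ 2 + p := by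
    have e2 : F2 * Q = (ρ * h * W ^ 2 * u ^ 2 + p) * Q := by
      rw [hF2, inv_mul_eq_div, div_mul_cancel₀ _ hQne, hQ', hF1', hz1, hz2, hLx, hLy]
      linear_combination (ρ * u ^ 2 * W ^ 4 / p) * hα' - (ρ * u ^ 2 * W ^ 4 + ρ * W ^ 2) * hpinv
    exact mul_right_cancel₀ hQne e2
  have hF3' : F3 = ρ * h * W ^ 2 * u * v := by
    have e3 : F3 * Q = (ρ * h * W ^ 2 * u * v) * Q := by
      rw [hF3, inv_mul_eq_div, div_mul_cancel₀ _ hQne, hQ', hF1', hz1, hz2, hLy]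
      linear_combination (ρ * u * v * W ^ 4 / p) * hα' - (ρ * u * v * W ^ 4) * hpinv
    exact mul_right_cancel₀ hQne e3
  refine ⟨hF1', hF2', hF3', ?_⟩
  have e4 : F4 * W = (ρ * h * W ^ 2 * u) * W := by
    rw [hF4, inv_mul_eq_div, div_mul_cancel₀ _ hWne, hF1', hF2', hF3']
    linear_combination (u * W) * hα' - (ρ * h * u * W) * hW2
  exact mul_right_cancel₀ hWne e4
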